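/- Let T ∈ ℕ and for each t ∈ {1,…,T} let P_t and Q_t be probability measures on a measurable space (Ω_t, F_t). Let P = ⊗_{t=1}^T P_t and Q = ⊗_{t=1}^T Q_t be the product measures on the product space, and let C be any measurable subset of the product space. Then ∑_{t=1}^T KL(P_t‖Q_t) ≥ kl(P(C), Q(C)). -/

import Mathlib

open MeasureTheory Real Set Classical
open scoped ENNReal

universe u


open MeasureTheory Classical

/-- Kullback–Leibler divergence `KL(P‖Q)`, equal to `∫ log(dP/dQ) dP` when
`P ≪ Q` (and this log-likelihood ratio is `P`-integrable), and `+∞` otherwise. -/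
noncomputable def klDiv {Ω : Type*} [MeasurableSpace Ω] (P Q : Measure Ω) : EReal :=
  if P ≪ Q ∧ Integrable (llr P Q) P then ((∫ ω, llr P Q ω ∂P : ℝ) : EReal) else ⊤

/-- Binary relative entropy. -/
noncomputable def klBern (x y : ℝ) : ℝ :=
  x * Real.log (x / y) + (1 - x) * Real.log ((1 - x) / (1 - y))

/-- Change-of-distribution inequality for product measures: for probability
measures `P_t, Q_t` on spaces `Ω_t` (`t = 1, …, T`) and any measurable subset
`C` of the product space, `∑_t KL(P_t‖Q_t) ≥ kl(P(C), Q(C))` where `P, Q` are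
the product measures. -/
lemma aux_measurePreserving_eval {T : ℕ} {Ω : Fin T → Type u} [∀ t, MeasurableSpace (Ω t)]
    (μ : ∀ t, Measure (Ω t)) [∀ t, IsProbabilityMeasure (μ t)] (i : Fin T) :
    MeasurePreserving (Function.eval i) (Measure.pi μ) (μ i) := by
  refine ⟨measurable_pi_apply i, ?_⟩
  ext s hs
  rw [Measure.map_apply (measurable_pi_apply i) hs, ← Set.univ_pi_update_univ, Measure.pi_pi]
  rw [Finset.prod_eq_single i (fun j _ hj => by simp [Function.update_of_ne hj])
    (fun h => absurd (Finset.mem_univ i) h)]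
  simp

lemma aux_lintegral_pi : ∀ (T : ℕ) {Ω : Fin T → Type u} [∀ t, MeasurableSpace (Ω t)]
    (μ : ∀ t, Measure (Ω t)) [∀ t, SigmaFinite (μ t)]
    (g : ∀ t, Ω t → ℝ≥0∞) (_ : ∀ t, Measurable (g t)),
    ∫⁻ ω, ∏ t, g t (ω t) ∂Measure.pi μ = ∏ t, ∫⁻ x, g t x ∂μ t := by
  intro T
  induction T with
  | zero =>
    intro Ω _ μ _ g hg
    simp [Measure.pi_of_empty μ, lintegral_dirac]
  | succ n ih =>
    intro Ω _ μ _ g hg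
    have he := (measurePreserving_piFinSuccAbove μ 0)
    have h1 : ∫⁻ ω, ∏ t, g t (ω t) ∂Measure.pi μ
        = ∫⁻ y, g 0 y.1 * ∏ j : Fin n, g (Fin.succ j) (y.2 j)
          ∂((μ 0).prod (Measure.pi fun j => μ (Fin.succAbove 0 j))) := by
      rw [← he.lintegral_comp]
      · refine lintegral_congr fun ω => ?_
        rw [Fin.prod_univ_succ]
        rfl
      · exact ((hg 0).comp measurable_fst).mul
          (Finset.measurable_prod _ fun j _ => (hg _).comp ((measurable_pi_apply j).comp measurable_snd))
    rw [h1, lintegral_prod_mul (f := g 0)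
      (g := fun (x : (i : Fin n) → Ω (Fin.succAbove 0 i)) => ∏ j : Fin n, g (Fin.succ j) (x j))
      (hg 0).aemeasurable
      (Finset.measurable_prod _ fun j _ => (hg _).comp (measurable_pi_apply j)).aemeasurable]
    rw [ih (fun j => μ (Fin.succAbove 0 j)) (fun j => g (Fin.succ j)) (fun j => hg _),
      Fin.prod_univ_succ]
    rfl

lemma aux_pi_withDensity {T : ℕ} {Ω : Fin T → Type u} [∀ t, MeasurableSpace (Ω t)]
    (μ : ∀ t, Measure (Ω t)) [∀ t, SigmaFinite (μ t)]
    (f : ∀ t, Ω t → ℝ≥0∞) (hf : ∀ t, Measurable (f t))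
    [∀ t, SigmaFinite ((μ t).withDensity (f t))] :
    Measure.pi (fun t => (μ t).withDensity (f t))
      = (Measure.pi μ).withDensity (fun ω => ∏ t, f t (ω t)) := by
  refine (Measure.pi_eq (μ := fun t => (μ t).withDensity (f t)) fun s hs => ?_)
  rw [withDensity_apply _ (MeasurableSet.univ_pi hs)]
  have hind : ∀ ω : ∀ t, Ω t, (Set.univ.pi s).indicator (fun ω => ∏ t, f t (ω t)) ω
      = ∏ t, (s t).indicator (f t) (ω t) := by
    intro ω
    by_cases hω : ω ∈ Set.univ.pi s
    · rw [Set.indicator_of_mem hω]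
      exact Finset.prod_congr rfl fun t _ =>
        (Set.indicator_of_mem (hω t (Set.mem_univ t)) _).symm
    · rw [Set.indicator_of_notMem hω]
      simp only [Set.mem_univ_pi, not_forall] at hω
      obtain ⟨t, ht⟩ := hω
      exact (Finset.prod_eq_zero (Finset.mem_univ t) (Set.indicator_of_notMem ht _)).symm
  rw [← lintegral_indicator (MeasurableSet.univ_pi hs)]
  simp_rw [hind]
  rw [aux_lintegral_pi T μ _ (fun t => (hf t).indicator (hs t))]
  exact Finset.prod_congr rfl fun t _ => by
    rw [lintegral_indicator (hs t), withDensity_apply _ (hs t)]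

lemma aux_setIntegral_llr_ge {α : Type u} [MeasurableSpace α] (μ ν : Measure α)
    [IsProbabilityMeasure μ] [IsProbabilityMeasure ν] (hμν : μ ≪ ν)
    (hint : Integrable (llr μ ν) μ) {C : Set α} (hC : MeasurableSet C) :
    (μ C).toReal * Real.log ((μ C).toReal / (ν C).toReal) ≤ ∫ x in C, llr μ ν x ∂μ := by
  by_cases hp0 : μ C = 0
  · simp [hp0, Measure.restrict_eq_zero.mpr hp0]
  set p := (μ C).toReal with hp
  set q := (ν C).toReal with hq
  have hq0 : ν C ≠ 0 := fun h => hp0 (hμν h)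
  have hppos : 0 < p := ENNReal.toReal_pos hp0 (measure_ne_top _ _)
  have hqpos : 0 < q := ENNReal.toReal_pos hq0 (measure_ne_top _ _)
  set c := q / p with hc
  have hcpos : 0 < c := div_pos hqpos hppos
  set d := μ.rnDeriv ν with hd
  have hd_meas : Measurable d := Measure.measurable_rnDeriv μ ν
  set g := fun x => (d x).toReal with hg
  have hg_meas : Measurable g := hd_meas.ennreal_toReal
  have h_pos : ∀ᵐ x ∂μ, 0 < d x := Measure.rnDeriv_pos hμν
  have h_fin : ∀ᵐ x ∂μ, d x < ∞ := hμν.ae_le (Measure.rnDeriv_lt_top μ ν)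
  -- the inverse of the density integrates to at most ν C on C
  have h_lint : ∫⁻ x in C, (d x)⁻¹ ∂μ ≤ ν C := by
    conv_lhs => rw [← Measure.withDensity_rnDeriv_eq μ ν hμν]
    rw [restrict_withDensity hC, lintegral_withDensity_eq_lintegral_mul _ (f := μ.rnDeriv ν) (g := fun x => (d x)⁻¹) hd_meas hd_meas.inv]
    calc ∫⁻ x in C, (d * fun x => (d x)⁻¹) x ∂ν ≤ ∫⁻ _ in C, 1 ∂ν :=
          lintegral_mono fun x => (d x).mul_inv_le_one
      _ = ν C := by simp
  -- identification of ofReal (g x)⁻¹ with (d x)⁻¹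
  have h_ae_inv : ∀ᵐ x ∂μ, ENNReal.ofReal (g x)⁻¹ = (d x)⁻¹ := by
    filter_upwards [h_pos, h_fin] with x h1 h2
    rw [hg, ← ENNReal.toReal_inv, ENNReal.ofReal_toReal]
    simp [h1.ne']
  have h_int_inv : IntegrableOn (fun x => (g x)⁻¹) C μ := by
    refine ⟨(hg_meas.inv).aestronglyMeasurable, ?_⟩
    rw [hasFiniteIntegral_iff_norm]
    calc ∫⁻ x in C, ENNReal.ofReal ‖(g x)⁻¹‖ ∂μ
        = ∫⁻ x in C, ENNReal.ofReal (g x)⁻¹ ∂μ := by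
          refine lintegral_congr fun x => by
            rw [Real.norm_of_nonneg (inv_nonneg.mpr ENNReal.toReal_nonneg)]
      _ = ∫⁻ x in C, (d x)⁻¹ ∂μ := lintegral_congr_ae (ae_restrict_of_ae h_ae_inv)
      _ ≤ ν C := h_lint
      _ < ∞ := measure_lt_top _ _
  have h_int_le : ∫ x in C, (g x)⁻¹ ∂μ ≤ q := by
    rw [integral_eq_lintegral_of_nonneg_ae
      (Filter.Eventually.of_forall fun x => inv_nonneg.mpr ENNReal.toReal_nonneg)
      (hg_meas.inv).aestronglyMeasurable]
    rw [lintegral_congr_ae (ae_restrict_of_ae h_ae_inv)]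
    exact ENNReal.toReal_le_toReal (h_lint.trans_lt (measure_lt_top _ _)).ne
      (measure_ne_top _ _) |>.mpr h_lint
  -- pointwise inequality
  have h_ptwise : ∀ᵐ x ∂μ.restrict C, -llr μ ν x ≤ (g x)⁻¹ / c - 1 + Real.log c := by
    refine ae_restrict_of_ae ?_
    filter_upwards [h_pos, h_fin] with x h1 h2
    have hgx : 0 < g x := ENNReal.toReal_pos h1.ne' h2.ne
    have h3 : 0 < (g x)⁻¹ / c := div_pos (inv_pos.mpr hgx) hcpos
    have := Real.log_le_sub_one_of_pos h3
    rw [Real.log_div (inv_pos.mpr hgx).ne' hcpos.ne', Real.log_inv] at this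
    have : -Real.log (g x) ≤ (g x)⁻¹ / c - 1 + Real.log c := by linarith
    exact this
  -- integrate
  have h_int_rhs : Integrable (fun x => (g x)⁻¹ / c - 1 + Real.log c) (μ.restrict C) := by
    exact ((h_int_inv.div_const c).sub (integrable_const 1)).add (integrable_const _)
  have h_integral : ∫ x in C, -llr μ ν x ∂μ ≤ ∫ x in C, ((g x)⁻¹ / c - 1 + Real.log c) ∂μ :=
    integral_mono_ae (hint.restrict.neg) h_int_rhs h_ptwise
  have h_meas_univ : (μ.restrict C) Set.univ = μ C := by simp [Measure.restrict_apply_univ]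
  have h1 : Integrable (fun x => (g x)⁻¹ / c - 1) (μ.restrict C) :=
    (h_int_inv.div_const c).sub (integrable_const 1)
  have h_rhs : ∫ x in C, ((g x)⁻¹ / c - 1 + Real.log c) ∂μ ≤ p * Real.log c := by
    rw [integral_add h1 (integrable_const _),
      integral_sub (h_int_inv.div_const c) (integrable_const 1),
      integral_div, integral_const, integral_const, Measure.real, h_meas_univ]
    have hqc : q / c = p := by rw [hc]; field_simp
    have h2 : (∫ x in C, (g x)⁻¹ ∂μ) / c ≤ q / c := by gcongr
    rw [hqc] at h2
    simp only [smul_eq_mul, mul_one]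
    nlinarith [Real.log_le_sub_one_of_pos hcpos]
  have h_neg : -(∫ x in C, llr μ ν x ∂μ) ≤ p * Real.log c := by
    rw [← integral_neg]
    exact h_integral.trans h_rhs
  have hlog : Real.log (p / q) = -Real.log c := by
    rw [hc, ← Real.log_inv, inv_div]
  rw [hlog]
  linarith

lemma aux_klBern_le {α : Type u} [MeasurableSpace α] (μ ν : Measure α)
    [IsProbabilityMeasure μ] [IsProbabilityMeasure ν] (hμν : μ ≪ ν)
    (hint : Integrable (llr μ ν) μ) {C : Set α} (hC : MeasurableSet C) :
    klBern (μ C).toReal (ν C).toReal ≤ ∫ x, llr μ ν x ∂μ := by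
  have h1 := aux_setIntegral_llr_ge μ ν hμν hint hC
  have h2 := aux_setIntegral_llr_ge μ ν hμν hint hC.compl
  have hcompl : ∀ (ρ : Measure α) [IsProbabilityMeasure ρ],
      (ρ Cᶜ).toReal = 1 - (ρ C).toReal := by
    intro ρ _
    rw [measure_compl hC (measure_ne_top _ _), measure_univ,
      ENNReal.toReal_sub_of_le prob_le_one ENNReal.one_ne_top, ENNReal.toReal_one]
  rw [hcompl μ, hcompl ν] at h2
  have h3 : ∫ x in C, llr μ ν x ∂μ + ∫ x in Cᶜ, llr μ ν x ∂μ = ∫ x, llr μ ν x ∂μ :=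
    integral_add_compl hC hint
  rw [klBern]
  linarith

lemma aux_main {T : ℕ} {Ω : Fin T → Type u} [∀ t, MeasurableSpace (Ω t)]
    (P Q : ∀ t, Measure (Ω t))
    [∀ t, IsProbabilityMeasure (P t)] [∀ t, IsProbabilityMeasure (Q t)]
    (hac : ∀ t, P t ≪ Q t) (hint : ∀ t, Integrable (llr (P t) (Q t)) (P t)) :
    Measure.pi P ≪ Measure.pi Q
      ∧ Integrable (llr (Measure.pi P) (Measure.pi Q)) (Measure.pi P)
      ∧ ∫ ω, llr (Measure.pi P) (Measure.pi Q) ω ∂Measure.pi P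
          = ∑ t, ∫ x, llr (P t) (Q t) x ∂P t := by
  have hf_meas : ∀ t, Measurable ((P t).rnDeriv (Q t)) :=
    fun t => Measure.measurable_rnDeriv _ _
  have hF_meas : Measurable (fun ω : ∀ t, Ω t => ∏ t, (P t).rnDeriv (Q t) (ω t)) :=
    Finset.measurable_prod _ fun t _ => (hf_meas t).comp (measurable_pi_apply t)
  have hP_eq : ∀ t, (Q t).withDensity ((P t).rnDeriv (Q t)) = P t :=
    fun t => Measure.withDensity_rnDeriv_eq _ _ (hac t)
  haveI : ∀ t, SigmaFinite ((Q t).withDensity ((P t).rnDeriv (Q t))) := fun t => by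
    rw [hP_eq t]; infer_instance
  have hpi : Measure.pi P
      = (Measure.pi Q).withDensity (fun ω => ∏ t, (P t).rnDeriv (Q t) (ω t)) := by
    conv_lhs => rw [show P = fun t => (Q t).withDensity ((P t).rnDeriv (Q t)) from
      funext fun t => (hP_eq t).symm]
    exact aux_pi_withDensity Q _ hf_meas
  have hacP : Measure.pi P ≪ Measure.pi Q := by
    rw [hpi]; exact withDensity_absolutelyContinuous _ _
  have h_rn : (Measure.pi P).rnDeriv (Measure.pi Q)
      =ᵐ[Measure.pi Q] fun ω => ∏ t, (P t).rnDeriv (Q t) (ω t) := by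
    conv_lhs => rw [hpi]
    exact Measure.rnDeriv_withDensity (Measure.pi Q) hF_meas
  have h_good : ∀ᵐ ω ∂Measure.pi P,
      ∀ t, 0 < (P t).rnDeriv (Q t) (ω t) ∧ (P t).rnDeriv (Q t) (ω t) < ∞ := by
    rw [ae_all_iff]
    intro t
    have h1 : ∀ᵐ x ∂P t, 0 < (P t).rnDeriv (Q t) x ∧ (P t).rnDeriv (Q t) x < ∞ :=
      (Measure.rnDeriv_pos (hac t)).and ((hac t).ae_le (Measure.rnDeriv_lt_top _ _))
    exact Measure.tendsto_eval_ae_ae.eventually h1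
  have h_llr : llr (Measure.pi P) (Measure.pi Q)
      =ᵐ[Measure.pi P] fun ω => ∑ t, llr (P t) (Q t) (ω t) := by
    filter_upwards [hacP.ae_le h_rn, h_good] with ω h1 h2
    rw [llr, h1, ENNReal.toReal_prod, Real.log_prod]
    · rfl
    · exact fun t _ => (ENNReal.toReal_pos (h2 t).1.ne' (h2 t).2.ne).ne'
  have hmap : ∀ t, Measure.map (Function.eval t) (Measure.pi P) = P t :=
    fun t => (aux_measurePreserving_eval P t).map_eq
  have hint_t : ∀ t, Integrable (fun ω : ∀ s, Ω s => llr (P t) (Q t) (ω t)) (Measure.pi P) := by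
    intro t
    have hmap' : Measure.map (fun ω : ∀ s, Ω s => ω t) (Measure.pi P) = P t := hmap t
    exact (integrable_map_measure ((stronglyMeasurable_llr (P t) (Q t)).aestronglyMeasurable)
      (measurable_pi_apply t).aemeasurable).mp (by rw [hmap']; exact hint t)
  have h_sum_int : Integrable (fun ω => ∑ t, llr (P t) (Q t) (ω t)) (Measure.pi P) :=
    integrable_finset_sum _ fun t _ => hint_t t
  refine ⟨hacP, h_sum_int.congr h_llr.symm, ?_⟩
  rw [integral_congr_ae h_llr, integral_finset_sum _ fun t _ => hint_t t]
  refine Finset.sum_congr rfl fun t _ => ?_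
  rw [← hmap t, integral_map (measurable_pi_apply t).aemeasurable
    ((stronglyMeasurable_llr _ _).aestronglyMeasurable)]

lemma aux_coe_sum {ι : Type*} (s : Finset ι) (f : ι → ℝ) :
    ((∑ i ∈ s, f i : ℝ) : EReal) = ∑ i ∈ s, (f i : EReal) :=
  map_sum (⟨⟨Real.toEReal, EReal.coe_zero⟩, EReal.coe_add⟩ : ℝ →+ EReal) f s

theorem stmt_1 {T : ℕ} {Ω : Fin T → Type*} [∀ t, MeasurableSpace (Ω t)]
    (P Q : ∀ t, Measure (Ω t))
    [∀ t, IsProbabilityMeasure (P t)] [∀ t, IsProbabilityMeasure (Q t)]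
    (C : Set (∀ t, Ω t)) (hC : MeasurableSet C) :
    ∑ t, klDiv (P t) (Q t) ≥
      (klBern ((Measure.pi P) C).toReal ((Measure.pi Q) C).toReal : EReal) := by
  by_cases h : ∀ t, P t ≪ Q t ∧ Integrable (llr (P t) (Q t)) (P t)
  · obtain ⟨hacP, hintP, hsum⟩ := aux_main P Q (fun t => (h t).1) (fun t => (h t).2)
    have hklb := aux_klBern_le (Measure.pi P) (Measure.pi Q) hacP hintP hC
    have hrw : ∑ t, klDiv (P t) (Q t)
        = ((∑ t, ∫ x, llr (P t) (Q t) x ∂P t : ℝ) : EReal) := by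
      rw [aux_coe_sum]
      exact Finset.sum_congr rfl fun t _ => by rw [klDiv, if_pos (h t)]
    rw [hrw, ge_iff_le, EReal.coe_le_coe_iff]
    rw [← hsum]
    exact hklb
  · obtain ⟨t₀, ht₀⟩ := Classical.not_forall.mp h
    have htop : klDiv (P t₀) (Q t₀) = ⊤ := by rw [klDiv, if_neg ht₀]
    have hne_bot : ∀ t, klDiv (P t) (Q t) ≠ ⊥ := by
      intro t; rw [klDiv]; split
      · exact EReal.coe_ne_bot _
      · simp
    have hS : (∑ t ∈ Finset.univ.erase t₀, klDiv (P t) (Q t)) ≠ ⊥ :=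
      Finset.sum_induction _ (fun x => x ≠ ⊥)
        (fun a b ha hb => by simp [EReal.add_eq_bot_iff, ha, hb]) (by simp)
        (fun t _ => hne_bot t)
    rw [ge_iff_le, ← Finset.add_sum_erase _ _ (Finset.mem_univ t₀), htop,
      EReal.top_add_of_ne_bot hS]
    exact le_top
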